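/- Let p be a prime and f ≥ 1. For every integer j ≥ 0 there exists a unique integer k such that both intervals [1/(p-1), p/(p-1)) + k and [1/(p-1), p/(p-1)) + k + 1 have nonempty intersection with the open interval (jp/(p-1), (j+1)p/(p-1)). Moreover, writing j - 1 ≡ b (mod p-1) with 0 ≤ b < p-1 (and b = 0 if p = 2), this unique k satisfies k ≡ b + 1 (mod p). -/
import Mathlib

lemma aux_nonempty {a b c d : ℝ} (hab : a < b) (hcd : c < d) (had : a < d) (hcb : c < b) :
    (Set.Ico a b ∩ Set.Ioo c d).Nonempty := by
  have h : max a c < min b d := max_lt (lt_min hab had) (lt_min hcb hcd)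
  refine ⟨(max a c + min b d)/2, ⟨?_, ?_⟩, ?_, ?_⟩
  · have := le_max_left a c; linarith
  · have := min_le_left b d; linarith
  · have := le_max_right a c; linarith
  · have := min_le_right b d; linarith

lemma aux_forward {a b c d : ℝ} (h : (Set.Ico a b ∩ Set.Ioo c d).Nonempty) :
    a < d ∧ c < b := by
  obtain ⟨x, ⟨hax, hxb⟩, hcx, hxd⟩ := h
  exact ⟨lt_of_le_of_lt hax hxd, lt_trans hcx hxb⟩

theorem stmt_1 (p : ℕ) (hp : p.Prime) (j : ℕ) (b : ℤ)
    (hb0 : 0 ≤ b) (hb1 : b < (p : ℤ) - 1 ∨ (p = 2 ∧ b = 0))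
    (hbcong : ((p : ℤ) - 1) ∣ ((j : ℤ) - 1 - b)) :
    (∃! k : ℤ,
      (Set.Ico ((1 : ℝ) / ((p : ℝ) - 1) + (k : ℝ)) ((p : ℝ) / ((p : ℝ) - 1) + (k : ℝ)) ∩
        Set.Ioo ((j : ℝ) * (p : ℝ) / ((p : ℝ) - 1)) (((j : ℝ) + 1) * (p : ℝ) / ((p : ℝ) - 1))).Nonempty ∧
      (Set.Ico ((1 : ℝ) / ((p : ℝ) - 1) + ((k : ℝ) + 1)) ((p : ℝ) / ((p : ℝ) - 1) + ((k : ℝ) + 1)) ∩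
        Set.Ioo ((j : ℝ) * (p : ℝ) / ((p : ℝ) - 1)) (((j : ℝ) + 1) * (p : ℝ) / ((p : ℝ) - 1))).Nonempty) ∧
    (∀ k : ℤ,
      ((Set.Ico ((1 : ℝ) / ((p : ℝ) - 1) + (k : ℝ)) ((p : ℝ) / ((p : ℝ) - 1) + (k : ℝ)) ∩
        Set.Ioo ((j : ℝ) * (p : ℝ) / ((p : ℝ) - 1)) (((j : ℝ) + 1) * (p : ℝ) / ((p : ℝ) - 1))).Nonempty ∧
      (Set.Ico ((1 : ℝ) / ((p : ℝ) - 1) + ((k : ℝ) + 1)) ((p : ℝ) / ((p : ℝ) - 1) + ((k : ℝ) + 1)) ∩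
        Set.Ioo ((j : ℝ) * (p : ℝ) / ((p : ℝ) - 1)) (((j : ℝ) + 1) * (p : ℝ) / ((p : ℝ) - 1))).Nonempty) →
      (p : ℤ) ∣ (k - (b + 1))) := by
  have hp2 : 2 ≤ p := hp.two_le
  have hp2' : (2:ℤ) ≤ (p:ℤ) := by exact_mod_cast hp2
  have hq : (0:ℝ) < (p:ℝ) - 1 := by
    have : (2:ℝ) ≤ (p:ℝ) := by exact_mod_cast hp2
    linarith
  have hb1' : b < (p:ℤ) - 1 := by
    rcases hb1 with h | ⟨h2, h0⟩
    · exact h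
    · subst h2; subst h0; norm_num
  have cond_iff : ∀ k : ℤ,
      ((Set.Ico ((1 : ℝ) / ((p : ℝ) - 1) + (k : ℝ)) ((p : ℝ) / ((p : ℝ) - 1) + (k : ℝ)) ∩
        Set.Ioo ((j : ℝ) * (p : ℝ) / ((p : ℝ) - 1)) (((j : ℝ) + 1) * (p : ℝ) / ((p : ℝ) - 1))).Nonempty ∧
      (Set.Ico ((1 : ℝ) / ((p : ℝ) - 1) + ((k : ℝ) + 1)) ((p : ℝ) / ((p : ℝ) - 1) + ((k : ℝ) + 1)) ∩
        Set.Ioo ((j : ℝ) * (p : ℝ) / ((p : ℝ) - 1)) (((j : ℝ) + 1) * (p : ℝ) / ((p : ℝ) - 1))).Nonempty) ↔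
      (((j:ℤ)-1)*p < k*((p:ℤ)-1) ∧ k*((p:ℤ)-1) < (j:ℤ)*p) := by
    intro k
    have hpR : (2:ℝ) ≤ (p:ℝ) := by exact_mod_cast hp2
    constructor
    · rintro ⟨h1, h2⟩
      obtain ⟨_, h1b⟩ := aux_forward h1
      obtain ⟨h2a, _⟩ := aux_forward h2
      constructor
      · simp only [div_add' _ _ _ hq.ne'] at h1b
        rw [div_lt_div_iff₀ hq hq] at h1b
        have := lt_of_mul_lt_mul_right h1b hq.le
        have h' : (j:ℤ)*p < (p:ℤ) + k*((p:ℤ)-1) := by exact_mod_cast this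
        linarith
      · simp only [div_add' _ _ _ hq.ne'] at h2a
        rw [div_lt_div_iff₀ hq hq] at h2a
        have := lt_of_mul_lt_mul_right h2a hq.le
        have h' : (1:ℤ) + (k+1)*((p:ℤ)-1) < ((j:ℤ)+1)*p := by exact_mod_cast this
        linarith
    · rintro ⟨hlo, hhi⟩
      have hloR : ((j:ℝ)-1)*p < (k:ℝ)*((p:ℝ)-1) := by exact_mod_cast hlo
      have hhiR : (k:ℝ)*((p:ℝ)-1) < (j:ℝ)*p := by exact_mod_cast hhi
      constructor <;>
      · apply aux_nonempty <;>
        · try simp only [div_add' _ _ _ hq.ne']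
          rw [div_lt_div_iff₀ hq hq]
          nlinarith [hq, hloR, hhiR, hpR]
  -- the canonical k
  obtain ⟨m, hm⟩ := hbcong
  set k0 : ℤ := (j:ℤ) + m with hk0def
  have hk0eq : k0 * ((p:ℤ) - 1) = ((j:ℤ)-1)*p + ((p:ℤ)-1) - b := by
    rw [hk0def]; linear_combination -hm
  have hlo0 : ((j:ℤ)-1)*p < k0*((p:ℤ)-1) := by rw [hk0eq]; linarith
  have hhi0 : k0*((p:ℤ)-1) < (j:ℤ)*p := by rw [hk0eq]; linarith
  have uniq : ∀ k : ℤ, (((j:ℤ)-1)*p < k*((p:ℤ)-1) ∧ k*((p:ℤ)-1) < (j:ℤ)*p) → k = k0 := by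
    intro k hk
    by_contra hne
    have hu1 : k*((p:ℤ)-1) + 1 ≤ (j:ℤ)*p := Int.lt_iff_add_one_le.mp hk.2
    have hu2 : ((j:ℤ)-1)*p + 1 ≤ k*((p:ℤ)-1) := Int.lt_iff_add_one_le.mp hk.1
    have hu3 : k0*((p:ℤ)-1) + 1 ≤ (j:ℤ)*p := Int.lt_iff_add_one_le.mp hhi0
    have hu4 : ((j:ℤ)-1)*p + 1 ≤ k0*((p:ℤ)-1) := Int.lt_iff_add_one_le.mp hlo0
    rcases lt_or_gt_of_ne hne with h | h
    · have h' : k + 1 ≤ k0 := Int.lt_iff_add_one_le.mp h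
      have := mul_le_mul_of_nonneg_right h' (by linarith : (0:ℤ) ≤ (p:ℤ)-1)
      linarith
    · have h' : k0 + 1 ≤ k := Int.lt_iff_add_one_le.mp h
      have := mul_le_mul_of_nonneg_right h' (by linarith : (0:ℤ) ≤ (p:ℤ)-1)
      linarith
  refine ⟨⟨k0, (cond_iff k0).mpr ⟨hlo0, hhi0⟩, fun k hk => uniq k ((cond_iff k).mp hk)⟩, ?_⟩
  intro k hk
  have hkk0 : k = k0 := uniq k ((cond_iff k).mp hk)
  subst hkk0
  exact ⟨m, by linear_combination hm⟩
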